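/- Evasion of a single blocked node: for every N ≥ 1 and every blocked set B = {n_b} with 1 ≤ n_b ≤ 4^N−2, an evasion tour exists; that is, the agent can start at node h_N(0), visit every node of the grid except h_N(n_b), end at node h_N(4^N−1), and never have a straight-line segment between consecutive waypoints pass through the interior of the blocked cell. -/

import Mathlib

/-- The `N`-th order approximated Hilbert curve, mapping indices `{0,...,4^N-1}`
to nodes of the grid `{0,...,2^N-1} × {0,...,2^N-1} ⊆ ℤ × ℤ`. -/
def hilbert : ℕ → ℕ → ℤ × ℤ
  | 0, _ => (0, 0)
  | 1, i =>
    if i = 0 then (0, 0)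
    else if i = 1 then (0, 1)
    else if i = 2 then (1, 1)
    else (1, 0)
  | N + 2, i =>
    let q := i / 4 ^ (N + 1)
    let s : ℤ := 2 ^ (N + 1)
    let p := hilbert (N + 1) (i % 4 ^ (N + 1))
    if q = 0 then (p.2, p.1)
    else if q = 1 then (p.1, p.2 + s)
    else if q = 2 then (p.1 + s, p.2 + s)
    else (2 * s - 1 - p.2, s - 1 - p.1)

/-- Euclidean distance between two points of `ℤ × ℤ`. -/
noncomputable def euclDist (a b : ℤ × ℤ) : ℝ :=
  Real.sqrt (((a.1 - b.1 : ℤ) : ℝ) ^ 2 + ((a.2 - b.2 : ℤ) : ℝ) ^ 2)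

/-- Two points of `ℤ × ℤ` are edge connected if their Euclidean distance equals 1. -/
def EdgeConnected (a b : ℤ × ℤ) : Prop := euclDist a b = 1

/-- Two points of `ℤ × ℤ` are vertex connected if both coordinates differ by exactly 1. -/
def VertexConnected (a b : ℤ × ℤ) : Prop := |a.1 - b.1| = 1 ∧ |a.2 - b.2| = 1

/-- Membership in the grid `{0,...,2^N-1} × {0,...,2^N-1}`. -/
def InGrid (N : ℕ) (p : ℤ × ℤ) : Prop :=
  0 ≤ p.1 ∧ p.1 ≤ 2 ^ N - 1 ∧ 0 ≤ p.2 ∧ p.2 ≤ 2 ^ N - 1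

/-- The closed segment from `u` to `v` (centres of cells, viewed in `ℝ²`) is disjoint
from the open unit cell centred at `c`. -/
def SegAvoidsCell (u v c : ℤ × ℤ) : Prop :=
  ∀ t : ℝ, t ∈ Set.Icc (0 : ℝ) 1 →
    ¬ (|(1 - t) * (u.1 : ℝ) + t * (v.1 : ℝ) - (c.1 : ℝ)| < 1 / 2 ∧
       |(1 - t) * (u.2 : ℝ) + t * (v.2 : ℝ) - (c.2 : ℝ)| < 1 / 2)

/-- An evasion tour for the blocked index set `B` on the `N`-th order Hilbert grid:
a sequence of waypoints `w 0, ..., w m` in the grid, starting at the entry node,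
ending at the exit node, avoiding all blocked nodes, covering every unblocked grid
point, and whose straight-line segments avoid the interiors of all blocked cells. -/
def IsEvasionTour (N : ℕ) (B : Finset ℕ) (m : ℕ) (w : ℕ → ℤ × ℤ) : Prop :=
  w 0 = hilbert N 0 ∧
  w m = hilbert N (4 ^ N - 1) ∧
  (∀ j ≤ m, InGrid N (w j)) ∧
  (∀ j ≤ m, ∀ b ∈ B, w j ≠ hilbert N b) ∧
  (∀ p : ℤ × ℤ, InGrid N p → (∀ b ∈ B, p ≠ hilbert N b) → ∃ j ≤ m, w j = p) ∧
  (∀ j < m, ∀ b ∈ B, SegAvoidsCell (w j) (w (j + 1)) (hilbert N b))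

lemma hilbert_grid : ∀ N i, InGrid N (hilbert N i) := by
  intro N
  induction N using Nat.strong_induction_on with
  | _ N ih =>
    match N with
    | 0 => intro i; simp [hilbert, InGrid]
    | 1 =>
      intro i
      simp only [hilbert, InGrid]
      split <;> try split <;> try split
      all_goals norm_num
    | N + 2 =>
      intro i
      have hp := ih (N + 1) (by omega) (i % 4 ^ (N + 1))
      obtain ⟨h1, h2, h3, h4⟩ := hp
      have hs : (0 : ℤ) < 2 ^ (N + 1) := by positivity
      have hpow : (2 : ℤ) ^ (N + 2) = 2 * 2 ^ (N + 1) := by ring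
      simp only [hilbert, InGrid]
      split
      · exact ⟨h3, by omega, h1, by omega⟩
      split
      · exact ⟨h1, by omega, by omega, by omega⟩
      split
      · exact ⟨by omega, by omega, by omega, by omega⟩
      · exact ⟨by omega, by omega, by omega, by omega⟩

lemma hilbert_zero : ∀ N, hilbert N 0 = (0, 0) := by
  intro N
  induction N using Nat.strong_induction_on with
  | _ N ih =>
    match N with
    | 0 => rfl
    | 1 => rfl
    | N + 2 =>
      have h := ih (N + 1) (by omega)
      simp [hilbert, Nat.zero_div, Nat.zero_mod, h]

lemma hilbert_last : ∀ N, 1 ≤ N → hilbert N (4 ^ N - 1) = ((2:ℤ) ^ N - 1, 0) := by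
  intro N
  induction N using Nat.strong_induction_on with
  | _ N ih =>
    match N with
    | 0 => intro h; omega
    | 1 => intro _; rfl
    | N + 2 =>
      intro _
      have hk : 1 ≤ 4 ^ (N + 1) := Nat.one_le_pow _ _ (by norm_num)
      have hp4 : (4:ℕ) ^ (N + 2) = 4 * 4 ^ (N + 1) := by ring
      have hi : 4 ^ (N + 2) - 1 = 4 ^ (N + 1) * 3 + (4 ^ (N + 1) - 1) := by omega
      have hq : (4 ^ (N + 2) - 1) / 4 ^ (N + 1) = 3 := by
        rw [hi, Nat.mul_add_div (by omega), Nat.div_eq_of_lt (by omega)]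
      have hr : (4 ^ (N + 2) - 1) % 4 ^ (N + 1) = 4 ^ (N + 1) - 1 := by
        rw [hi, Nat.mul_add_mod, Nat.mod_eq_of_lt (by omega)]
      have ihv := ih (N + 1) (by omega) (by omega)
      simp only [hilbert, hq, hr, ihv]
      norm_num
      ring

lemma hilbert_eq_zero : ∀ N i, i < 4 ^ N → hilbert N i = (0, 0) → i = 0 := by
  intro N
  induction N using Nat.strong_induction_on with
  | _ N ih =>
    match N with
    | 0 => intro i hi _; omega
    | 1 =>
      intro i hi h
      interval_cases i <;> first | rfl | (norm_num [hilbert, Prod.ext_iff] at h)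
    | N + 2 =>
      intro i hi h
      have hk : 1 ≤ 4 ^ (N + 1) := Nat.one_le_pow _ _ (by norm_num)
      have hp4 : (4:ℕ) ^ (N + 2) = 4 * 4 ^ (N + 1) := by ring
      have hdm := Nat.div_add_mod i (4 ^ (N + 1))
      have hrlt : i % 4 ^ (N + 1) < 4 ^ (N + 1) := Nat.mod_lt _ (by omega)
      have hq3 : i / 4 ^ (N + 1) < 4 := by
        rw [Nat.div_lt_iff_lt_mul (by omega)]; omega
      have hs : (0 : ℤ) < 2 ^ (N + 1) := by positivity
      simp only [hilbert] at h
      obtain ⟨g1, g2, g3, g4⟩ := hilbert_grid (N + 1) (i % 4 ^ (N + 1))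
      set p := hilbert (N + 1) (i % 4 ^ (N + 1)) with hpdef
      clear_value p
      obtain hq | hq | hq | hq : i / 4 ^ (N+1) = 0 ∨ i / 4 ^ (N+1) = 1 ∨ i / 4 ^ (N+1) = 2 ∨ i / 4 ^ (N+1) = 3 := by
        generalize i / 4 ^ (N+1) = q at hq3 ⊢; omega
      all_goals (simp only [hq] at h; rw [hq] at hdm; norm_num [Prod.ext_iff] at h)
      · have hp0 : hilbert (N + 1) (i % 4 ^ (N + 1)) = (0, 0) := by
          rw [← hpdef]; exact Prod.ext h.2 h.1
        have := ih (N + 1) (by omega) (i % 4 ^ (N + 1)) hrlt hp0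
        omega
      · omega
      · omega
      · omega

lemma hilbert_eq_last : ∀ N i, i < 4 ^ N → hilbert N i = ((2:ℤ) ^ N - 1, 0) → i + 1 = 4 ^ N := by
  intro N
  induction N using Nat.strong_induction_on with
  | _ N ih =>
    match N with
    | 0 => intro i hi _; omega
    | 1 =>
      intro i hi h
      interval_cases i
      · exfalso; rw [show hilbert 1 0 = ((0:ℤ), (0:ℤ)) from rfl] at h
        exact absurd h (by norm_num [Prod.ext_iff])
      · exfalso; rw [show hilbert 1 1 = ((0:ℤ), (1:ℤ)) from rfl] at h
        exact absurd h (by norm_num [Prod.ext_iff])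
      · exfalso; rw [show hilbert 1 2 = ((1:ℤ), (1:ℤ)) from rfl] at h
        exact absurd h (by norm_num [Prod.ext_iff])
      · rfl
    | N + 2 =>
      intro i hi h
      have hk : 1 ≤ 4 ^ (N + 1) := Nat.one_le_pow _ _ (by norm_num)
      have hp4 : (4:ℕ) ^ (N + 2) = 4 * 4 ^ (N + 1) := by ring
      have hdm := Nat.div_add_mod i (4 ^ (N + 1))
      have hrlt : i % 4 ^ (N + 1) < 4 ^ (N + 1) := Nat.mod_lt _ (by omega)
      have hq3 : i / 4 ^ (N + 1) < 4 := by
        rw [Nat.div_lt_iff_lt_mul (by omega)]; omega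
      have hs : (0 : ℤ) < 2 ^ (N + 1) := by positivity
      have hpz : (2 : ℤ) ^ (N + 2) = 2 * 2 ^ (N + 1) := by ring
      simp only [hilbert] at h
      obtain ⟨g1, g2, g3, g4⟩ := hilbert_grid (N + 1) (i % 4 ^ (N + 1))
      set p := hilbert (N + 1) (i % 4 ^ (N + 1)) with hpdef
      clear_value p
      obtain hq | hq | hq | hq : i / 4 ^ (N+1) = 0 ∨ i / 4 ^ (N+1) = 1 ∨ i / 4 ^ (N+1) = 2 ∨ i / 4 ^ (N+1) = 3 := by
        generalize i / 4 ^ (N+1) = q at hq3 ⊢; omega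
      all_goals (simp only [hq] at h; rw [hq] at hdm; norm_num [Prod.ext_iff] at h)
      · omega
      · omega
      · omega
      · have hpeq : hilbert (N + 1) (i % 4 ^ (N + 1)) = ((2:ℤ) ^ (N + 1) - 1, 0) := by
          rw [← hpdef]; apply Prod.ext <;> simp <;> omega
        have := ih (N + 1) (by omega) (i % 4 ^ (N + 1)) hrlt hpeq
        omega

/-- A permitted move: stay put, or move one unit horizontally or vertically. -/
def Step (u v : ℤ × ℤ) : Prop :=
  (u.1 = v.1 ∧ (u.2 = v.2 ∨ v.2 = u.2 + 1 ∨ u.2 = v.2 + 1)) ∨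
  (u.2 = v.2 ∧ (v.1 = u.1 + 1 ∨ u.1 = v.1 + 1))

lemma Step.symm {u v : ℤ × ℤ} (h : Step u v) : Step v u := by
  unfold Step at *; omega

lemma coord_helper (a b c' : ℤ) (ha : a ≠ c') (hb : b ≠ c')
    (hstep : a = b ∨ b = a + 1 ∨ a = b + 1) {t : ℝ} (ht0 : 0 ≤ t) (ht1 : t ≤ 1)
    (h : |(1 - t) * (a : ℝ) + t * (b : ℝ) - (c' : ℝ)| < 1 / 2) : False := by
  rw [abs_lt] at h
  obtain ⟨hl, hr⟩ := h
  rcases hstep with hs | hs | hs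
  · subst hs
    have key : (1 - t) * (a : ℝ) + t * (a : ℝ) - (c' : ℝ) = ((a - c' : ℤ) : ℝ) := by
      push_cast; ring
    rw [key] at hl hr
    have h1 : a - c' ≥ 1 ∨ a - c' ≤ -1 := by omega
    rcases h1 with h1 | h1
    · have : ((a - c' : ℤ) : ℝ) ≥ 1 := by exact_mod_cast h1
      linarith
    · have : ((a - c' : ℤ) : ℝ) ≤ -1 := by exact_mod_cast h1
      linarith
  · subst hs
    have key : (1 - t) * (a : ℝ) + t * ((a + 1 : ℤ) : ℝ) - (c' : ℝ) = ((a - c' : ℤ) : ℝ) + t := by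
      push_cast; ring
    rw [key] at hl hr
    have h1 : a - c' ≥ 1 ∨ a - c' ≤ -2 := by omega
    rcases h1 with h1 | h1
    · have : ((a - c' : ℤ) : ℝ) ≥ 1 := by exact_mod_cast h1
      linarith
    · have : ((a - c' : ℤ) : ℝ) ≤ -2 := by exact_mod_cast h1
      linarith
  · subst hs
    have key : (1 - t) * ((b + 1 : ℤ) : ℝ) + t * (b : ℝ) - (c' : ℝ) = ((b - c' : ℤ) : ℝ) + 1 - t := by
      push_cast; ring
    rw [key] at hl hr
    have h1 : b - c' ≥ 1 ∨ b - c' ≤ -2 := by omega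
    rcases h1 with h1 | h1
    · have : ((b - c' : ℤ) : ℝ) ≥ 1 := by exact_mod_cast h1
      linarith
    · have : ((b - c' : ℤ) : ℝ) ≤ -2 := by exact_mod_cast h1
      linarith

lemma step_segAvoids {u v c : ℤ × ℤ} (h : Step u v) (hu : u ≠ c) (hv : v ≠ c) :
    SegAvoidsCell u v c := by
  intro t ht ⟨h1, h2⟩
  obtain ⟨ht0, ht1⟩ := ht
  rcases h with ⟨he, hs⟩ | ⟨he, hs⟩
  · -- u.1 = v.1 (vertical or stay)
    by_cases hc : u.1 = c.1
    · -- then second coords of u, v differ from c.2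
      have hu2 : u.2 ≠ c.2 := fun h' => hu (Prod.ext hc h')
      have hv2 : v.2 ≠ c.2 := fun h' => hv (Prod.ext (he ▸ hc) h')
      exact coord_helper u.2 v.2 c.2 hu2 hv2 hs ht0 ht1 h2
    · exact coord_helper u.1 v.1 c.1 hc (he ▸ hc) (Or.inl he) ht0 ht1 h1
  · by_cases hc : u.2 = c.2
    · have hu1 : u.1 ≠ c.1 := fun h' => hu (Prod.ext h' hc)
      have hv1 : v.1 ≠ c.1 := fun h' => hv (Prod.ext h' (he ▸ hc))
      exact coord_helper u.1 v.1 c.1 hu1 hv1 (Or.inr hs) ht0 ht1 h1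
    · exact coord_helper u.2 v.2 c.2 hc (he ▸ hc) (Or.inl he) ht0 ht1 h2

lemma step_refl (u : ℤ × ℤ) : Step u u := Or.inl ⟨rfl, Or.inl rfl⟩

lemma seg_chain (f : ℕ → ℤ × ℤ) (m : ℕ) (hf : ∀ k, k < m → Step (f k) (f (k + 1))) :
    List.Chain' Step ((List.range (m + 1)).map f) := by
  rw [List.Chain', List.isChain_map, List.isChain_range_succ]
  exact hf

lemma seg_head (f : ℕ → ℤ × ℤ) (m : ℕ) :
    ((List.range (m + 1)).map f).head? = some (f 0) := by
  rw [List.range_succ_eq_map]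
  simp

lemma seg_last (f : ℕ → ℤ × ℤ) (m : ℕ) :
    ((List.range (m + 1)).map f).getLast? = some (f m) := by
  rw [List.range_succ, List.map_append]
  simp

lemma seg_mem {q : ℤ × ℤ} {f : ℕ → ℤ × ℤ} {m : ℕ} (h : q ∈ (List.range (m + 1)).map f) :
    ∃ k, k ≤ m ∧ q = f k := by
  simp only [List.mem_map, List.mem_range] at h
  obtain ⟨k, hk, hq⟩ := h
  exact ⟨k, by omega, hq.symm⟩

lemma inGrid'_mk {N : ℕ} {a b : ℤ} (ha : 0 ≤ a) (hb : a ≤ 2 ^ N - 1) (hc : 0 ≤ b)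
    (hd : b ≤ 2 ^ N - 1) : InGrid N (a, b) := ⟨ha, hb, hc, hd⟩

lemma exists_walk (N : ℕ) (hN : 1 ≤ N) (c p : ℤ × ℤ) (hc0 : c ≠ (0, 0)) (hcp : c ≠ p)
    (hp : InGrid N p) :
    ∃ L : List (ℤ × ℤ), L.head? = some ((0 : ℤ), (0 : ℤ)) ∧ L.getLast? = some p ∧
      L.Chain' Step ∧ ∀ q ∈ L, q ≠ c ∧ InGrid N q := by
  obtain ⟨p1, p2⟩ := p
  obtain ⟨c1, c2⟩ := c
  obtain ⟨h1, h2, h3, h4⟩ := hp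
  simp only at h1 h2 h3 h4
  obtain ⟨px, hpx⟩ := Int.eq_ofNat_of_zero_le h1
  obtain ⟨py, hpy⟩ := Int.eq_ofNat_of_zero_le h3
  subst hpx hpy
  have hn2 : (2 : ℤ) ≤ 2 ^ N := by
    calc (2 : ℤ) = 2 ^ 1 := by norm_num
    _ ≤ 2 ^ N := pow_le_pow_right₀ (by norm_num) hN
  have hc0' : ¬(c1 = 0 ∧ c2 = 0) := by simpa [Prod.ext_iff] using hc0
  have hcp' : ¬(c1 = (px : ℤ) ∧ c2 = (py : ℤ)) := by simpa [Prod.ext_iff] using hcp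
  by_cases hA : (c2 = 0 ∧ 0 ≤ c1 ∧ c1 ≤ (px : ℤ)) ∨ (c1 = (px : ℤ) ∧ 0 ≤ c2 ∧ c2 ≤ (py : ℤ))
  · by_cases hB : (c1 = 0 ∧ 0 ≤ c2 ∧ c2 ≤ (py : ℤ)) ∨ (c2 = (py : ℤ) ∧ 0 ≤ c1 ∧ c1 ≤ (px : ℤ))
    · -- degenerate cases
      have key : (c2 = 0 ∧ py = 0 ∧ 1 ≤ c1 ∧ c1 + 1 ≤ (px : ℤ)) ∨
          (c1 = 0 ∧ px = 0 ∧ 1 ≤ c2 ∧ c2 + 1 ≤ (py : ℤ)) := by omega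
      rcases key with ⟨k1, k2, k3, k4⟩ | ⟨k1, k2, k3, k4⟩
      · -- path C : up, across at height 1, down
        refine ⟨((0 : ℤ), (0 : ℤ)) ::
            (((List.range (px + 1)).map fun k : ℕ => ((k : ℤ), (1 : ℤ))) ++ [((px : ℤ), (0 : ℤ))]),
            rfl, ?_, ?_, ?_⟩
        · rw [← List.cons_append, List.getLast?_concat]
          simp [k2]
        · rw [List.Chain', List.isChain_cons]
          constructor
          · intro y hy
            rw [List.head?_append, seg_head] at hy
            simp at hy
            subst hy
            exact Or.inl ⟨rfl, Or.inr (Or.inl rfl)⟩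
          · rw [List.isChain_append]
            refine ⟨seg_chain _ _ ?_, List.isChain_singleton _, ?_⟩
            · intro k _
              exact Or.inr ⟨rfl, Or.inl (by push_cast; ring)⟩
            · intro x hx y hy
              rw [seg_last] at hx
              simp at hx hy
              subst hx hy
              exact Or.inl ⟨rfl, Or.inr (Or.inr rfl)⟩
        · intro q hq
          rcases List.mem_cons.1 hq with rfl | hq
          · refine ⟨?_, inGrid'_mk (by omega) (by omega) (by omega) (by omega)⟩
            simp only [ne_eq, Prod.mk.injEq, not_and]
            intro e1 e2
            omega
          rcases List.mem_append.1 hq with hq | hq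
          · obtain ⟨k, hk, rfl⟩ := seg_mem hq
            refine ⟨?_, inGrid'_mk (by omega) (by omega) (by omega) (by omega)⟩
            simp only [ne_eq, Prod.mk.injEq, not_and]
            intro e1 e2
            omega
          · simp only [List.mem_singleton] at hq
            subst hq
            refine ⟨?_, inGrid'_mk (by omega) (by omega) (by omega) (by omega)⟩
            simp only [ne_eq, Prod.mk.injEq, not_and]
            intro e1 e2
            omega
      · -- path D : right, up at x = 1, left
        refine ⟨((0 : ℤ), (0 : ℤ)) ::
            (((List.range (py + 1)).map fun k : ℕ => ((1 : ℤ), (k : ℤ))) ++ [((0 : ℤ), (py : ℤ))]),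
            rfl, ?_, ?_, ?_⟩
        · rw [← List.cons_append, List.getLast?_concat]
          simp [k2]
        · rw [List.Chain', List.isChain_cons]
          constructor
          · intro y hy
            rw [List.head?_append, seg_head] at hy
            simp at hy
            subst hy
            exact Or.inr ⟨rfl, Or.inl rfl⟩
          · rw [List.isChain_append]
            refine ⟨seg_chain _ _ ?_, List.isChain_singleton _, ?_⟩
            · intro k _
              exact Or.inl ⟨rfl, Or.inr (Or.inl (by push_cast; ring))⟩
            · intro x hx y hy
              rw [seg_last] at hx
              simp at hx hy
              subst hx hy
              exact Or.inr ⟨rfl, Or.inr rfl⟩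
        · intro q hq
          rcases List.mem_cons.1 hq with rfl | hq
          · refine ⟨?_, inGrid'_mk (by omega) (by omega) (by omega) (by omega)⟩
            simp only [ne_eq, Prod.mk.injEq, not_and]
            intro e1 e2
            omega
          rcases List.mem_append.1 hq with hq | hq
          · obtain ⟨k, hk, rfl⟩ := seg_mem hq
            refine ⟨?_, inGrid'_mk (by omega) (by omega) (by omega) (by omega)⟩
            simp only [ne_eq, Prod.mk.injEq, not_and]
            intro e1 e2
            omega
          · simp only [List.mem_singleton] at hq
            subst hq
            refine ⟨?_, inGrid'_mk (by omega) (by omega) (by omega) (by omega)⟩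
            simp only [ne_eq, Prod.mk.injEq, not_and]
            intro e1 e2
            omega
    · -- path B : vertical first, then horizontal at height py
      refine ⟨((List.range (py + 1)).map fun k : ℕ => ((0 : ℤ), (k : ℤ))) ++
          ((List.range (px + 1)).map fun k : ℕ => ((k : ℤ), (py : ℤ))), ?_, ?_, ?_, ?_⟩
      · rw [List.head?_append, seg_head]
        simp
      · rw [List.getLast?_append, seg_last]
        simp
      · rw [List.Chain', List.isChain_append]
        refine ⟨seg_chain _ _ ?_, seg_chain _ _ ?_, ?_⟩
        · intro k _
          exact Or.inl ⟨rfl, Or.inr (Or.inl (by push_cast; ring))⟩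
        · intro k _
          exact Or.inr ⟨rfl, Or.inl (by push_cast; ring)⟩
        · intro x hx y hy
          rw [seg_last] at hx
          rw [seg_head] at hy
          simp at hx hy
          subst hx hy
          exact step_refl _
      · intro q hq
        push_neg at hB
        rcases List.mem_append.1 hq with hq | hq <;> obtain ⟨k, hk, rfl⟩ := seg_mem hq
        · refine ⟨?_, inGrid'_mk (by omega) (by omega) (by omega) (by omega)⟩
          simp only [ne_eq, Prod.mk.injEq, not_and]
          intro e1 e2
          obtain ⟨hB1, hB2⟩ := hB
          omega
        · refine ⟨?_, inGrid'_mk (by omega) (by omega) (by omega) (by omega)⟩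
          simp only [ne_eq, Prod.mk.injEq, not_and]
          intro e1 e2
          obtain ⟨hB1, hB2⟩ := hB
          omega
  · -- path A : horizontal first at height 0, then vertical at x = px
    refine ⟨((List.range (px + 1)).map fun k : ℕ => ((k : ℤ), (0 : ℤ))) ++
        ((List.range (py + 1)).map fun k : ℕ => ((px : ℤ), (k : ℤ))), ?_, ?_, ?_, ?_⟩
    · rw [List.head?_append, seg_head]
      simp
    · rw [List.getLast?_append, seg_last]
      simp
    · rw [List.Chain', List.isChain_append]
      refine ⟨seg_chain _ _ ?_, seg_chain _ _ ?_, ?_⟩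
      · intro k _
        exact Or.inr ⟨rfl, Or.inl (by push_cast; ring)⟩
      · intro k _
        exact Or.inl ⟨rfl, Or.inr (Or.inl (by push_cast; ring))⟩
      · intro x hx y hy
        rw [seg_last] at hx
        rw [seg_head] at hy
        simp at hx hy
        subst hx hy
        exact step_refl _
    · intro q hq
      push_neg at hA
      rcases List.mem_append.1 hq with hq | hq <;> obtain ⟨k, hk, rfl⟩ := seg_mem hq
      · refine ⟨?_, inGrid'_mk (by omega) (by omega) (by omega) (by omega)⟩
        simp only [ne_eq, Prod.mk.injEq, not_and]
        intro e1 e2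
        obtain ⟨hA1, hA2⟩ := hA
        omega
      · refine ⟨?_, inGrid'_mk (by omega) (by omega) (by omega) (by omega)⟩
        simp only [ne_eq, Prod.mk.injEq, not_and]
        intro e1 e2
        obtain ⟨hA1, hA2⟩ := hA
        omega

lemma mem_of_getLast?' {α : Type*} {l : List α} {a : α} (h : l.getLast? = some a) : a ∈ l := by
  obtain ⟨hne, rfl⟩ := List.mem_getLast?_eq_getLast (Option.mem_def.2 h)
  exact List.getLast_mem hne

lemma exists_cover (N : ℕ) (hN : 1 ≤ N) (c : ℤ × ℤ) (hc0 : c ≠ (0, 0)) (S : Finset (ℤ × ℤ))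
    (hS : ∀ p ∈ S, InGrid N p ∧ p ≠ c) :
    ∃ L : List (ℤ × ℤ), L.head? = some ((0 : ℤ), (0 : ℤ)) ∧
      L.getLast? = some ((0 : ℤ), (0 : ℤ)) ∧ L.Chain' Step ∧
      (∀ q ∈ L, q ≠ c ∧ InGrid N q) ∧ ∀ p ∈ S, p ∈ L := by
  have hn2 : (2 : ℤ) ≤ 2 ^ N := by
    calc (2 : ℤ) = 2 ^ 1 := by norm_num
    _ ≤ 2 ^ N := pow_le_pow_right₀ (by norm_num) hN
  classical
  induction S using Finset.induction_on with
  | empty =>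
    refine ⟨[((0 : ℤ), (0 : ℤ))], rfl, rfl, List.isChain_singleton _, ?_, by simp⟩
    intro q hq
    simp only [List.mem_singleton] at hq
    subst hq
    exact ⟨Ne.symm hc0, inGrid'_mk le_rfl (by omega) le_rfl (by omega)⟩
  | @insert a S' ha ih =>
    obtain ⟨L', hh, hl, hch, hmem, hcov⟩ := ih fun p hp => hS p (Finset.mem_insert_of_mem hp)
    obtain ⟨haG, haC⟩ := hS a (Finset.mem_insert_self a _)
    obtain ⟨W, wh, wl, wch, wmem⟩ := exists_walk N hN c a hc0 (Ne.symm haC) haG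
    refine ⟨W ++ (W.reverse ++ L'), ?_, ?_, ?_, ?_, ?_⟩
    · rw [List.head?_append, wh]
      rfl
    · rw [List.getLast?_append, List.getLast?_append, hl]
      rfl
    · rw [List.Chain', List.isChain_append]
      refine ⟨wch, ?_, ?_⟩
      · rw [List.isChain_append]
        refine ⟨?_, hch, ?_⟩
        · rw [List.isChain_reverse]
          exact List.IsChain.imp (fun u v h => h.symm) wch
        · intro x hx y hy
          rw [List.getLast?_reverse, wh] at hx
          rw [hh] at hy
          simp only [Option.mem_def, Option.some.injEq] at hx hy
          subst hx hy
          exact step_refl _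
      · intro x hx y hy
        rw [wl] at hx
        rw [List.head?_append, List.head?_reverse, wl] at hy
        rw [Option.or_of_isSome (by rfl)] at hy
        simp only [Option.mem_def, Option.some.injEq] at hx hy
        subst hx hy
        exact step_refl _
    · intro q hq
      rcases List.mem_append.1 hq with h | h
      · exact wmem q h
      rcases List.mem_append.1 h with h | h
      · exact wmem q (List.mem_reverse.1 h)
      · exact hmem q h
    · intro p hp
      rcases Finset.mem_insert.1 hp with rfl | hp
      · exact List.mem_append.2 (Or.inl (mem_of_getLast?' wl))
      · exact List.mem_append.2 (Or.inr (List.mem_append.2 (Or.inr (hcov p hp))))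

theorem hilbert_evade_single_blocked (N nb : ℕ) (hN : 1 ≤ N) (h1 : 1 ≤ nb)
    (h2 : nb ≤ 4 ^ N - 2) :
    ∃ (m : ℕ) (w : ℕ → ℤ × ℤ), IsEvasionTour N {nb} m w := by
  classical
  set c := hilbert N nb with hcdef
  have h4N : 4 ≤ 4 ^ N := by
    calc (4 : ℕ) = 4 ^ 1 := by norm_num
    _ ≤ 4 ^ N := Nat.pow_le_pow_right (by norm_num) hN
  have hn2 : (2 : ℤ) ≤ 2 ^ N := by
    calc (2 : ℤ) = 2 ^ 1 := by norm_num
    _ ≤ 2 ^ N := pow_le_pow_right₀ (by norm_num) hN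
  have hnb4 : nb < 4 ^ N := by omega
  have hc0 : c ≠ ((0 : ℤ), (0 : ℤ)) := fun h => by
    have := hilbert_eq_zero N nb hnb4 h
    omega
  have hce : c ≠ ((2 : ℤ) ^ N - 1, (0 : ℤ)) := fun h => by
    have := hilbert_eq_last N nb hnb4 h
    omega
  let S : Finset (ℤ × ℤ) :=
    ((Finset.Icc (0 : ℤ) (2 ^ N - 1)) ×ˢ (Finset.Icc (0 : ℤ) (2 ^ N - 1))).filter (· ≠ c)
  have hS : ∀ p ∈ S, InGrid N p ∧ p ≠ c := by
    intro p hp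
    simp only [S, Finset.mem_filter, Finset.mem_product, Finset.mem_Icc] at hp
    exact ⟨⟨hp.1.1.1, hp.1.1.2, hp.1.2.1, hp.1.2.2⟩, hp.2⟩
  obtain ⟨L₁, h1h, h1l, h1c, h1m, h1cov⟩ := exists_cover N hN c hc0 S hS
  have hge : InGrid N ((2 : ℤ) ^ N - 1, (0 : ℤ)) := ⟨by omega, le_rfl, le_rfl, by omega⟩
  obtain ⟨L₂, h2h, h2l, h2c, h2m⟩ := exists_walk N hN c ((2 : ℤ) ^ N - 1, (0 : ℤ)) hc0 hce hge
  have hhead : (L₁ ++ L₂).head? = some ((0 : ℤ), (0 : ℤ)) := by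
    rw [List.head?_append, h1h]
    rfl
  have hlast : (L₁ ++ L₂).getLast? = some ((2 : ℤ) ^ N - 1, (0 : ℤ)) := by
    rw [List.getLast?_append, h2l]
    rfl
  have hchain : (L₁ ++ L₂).Chain' Step := by
    rw [List.Chain', List.isChain_append]
    refine ⟨h1c, h2c, ?_⟩
    intro x hx y hy
    rw [h1l] at hx
    rw [h2h] at hy
    simp only [Option.mem_def, Option.some.injEq] at hx hy
    subst hx hy
    exact step_refl _
  have hmem : ∀ q ∈ L₁ ++ L₂, q ≠ c ∧ InGrid N q := by
    intro q hq
    rcases List.mem_append.1 hq with h | h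
    · exact h1m q h
    · exact h2m q h
  have hLne : L₁ ++ L₂ ≠ [] := by
    intro h
    rw [h] at hhead
    simp at hhead
  have hlen : 1 ≤ (L₁ ++ L₂).length := List.length_pos_iff.2 hLne
  refine ⟨(L₁ ++ L₂).length - 1, fun j => (L₁ ++ L₂).getD j ((0 : ℤ), (0 : ℤ)),
    ?_, ?_, ?_, ?_, ?_, ?_⟩
  all_goals beta_reduce
  · rw [hilbert_zero]
    rw [List.getD_eq_getElem?_getD, ← List.head?_eq_getElem?, hhead]
    rfl
  · rw [hilbert_last N hN]
    rw [List.getD_eq_getElem?_getD, ← List.getLast?_eq_getElem?, hlast]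
    rfl
  · intro j hj
    have hjl : j < (L₁ ++ L₂).length := by omega
    rw [List.getD_eq_getElem _ _ hjl]
    exact (hmem _ (List.getElem_mem hjl)).2
  · intro j hj b hb
    have hjl : j < (L₁ ++ L₂).length := by omega
    rw [Finset.mem_singleton] at hb
    subst hb
    rw [List.getD_eq_getElem _ _ hjl]
    exact (hmem _ (List.getElem_mem hjl)).1
  · intro p hp hpb
    have hpc : p ≠ c := hpb nb (Finset.mem_singleton_self nb)
    have hpS : p ∈ S := by
      simp only [S, Finset.mem_filter, Finset.mem_product, Finset.mem_Icc]
      exact ⟨⟨⟨hp.1, hp.2.1⟩, ⟨hp.2.2.1, hp.2.2.2⟩⟩, hpc⟩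
    have hpL : p ∈ L₁ ++ L₂ := List.mem_append.2 (Or.inl (h1cov p hpS))
    obtain ⟨j, hjl, hje⟩ := List.mem_iff_getElem.1 hpL
    refine ⟨j, by omega, ?_⟩
    rw [List.getD_eq_getElem _ _ hjl]
    exact hje
  · intro j hj b hb
    rw [Finset.mem_singleton] at hb
    subst hb
    have hjl : j < (L₁ ++ L₂).length := by omega
    have hjl' : j + 1 < (L₁ ++ L₂).length := by omega
    have hstep := List.isChain_iff_getElem.1 hchain j (by omega)
    rw [List.getD_eq_getElem _ _ hjl, List.getD_eq_getElem _ _ hjl']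
    have e1 : (L₁ ++ L₂).get ⟨j, hjl⟩ = (L₁ ++ L₂)[j] := rfl
    have e2 : (L₁ ++ L₂).get ⟨j + 1, hjl'⟩ = (L₁ ++ L₂)[j + 1] := rfl
    exact step_segAvoids hstep (hmem _ (List.getElem_mem hjl)).1 (hmem _ (List.getElem_mem hjl')).1
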